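/- Let c ≥ 1 be a fixed integer and suppose f : ℕ → ℕ is a quasi-diagonal of an ℕ-rational generating function, i.e., f(n) = [x₁^{cn} ⋯ x_k^{cn}] F for some k ≥ 1 and F ∈ 𝓡_k. Then f is a diagonal of an ℕ-rational generating function: there exist ℓ ≥ 1 and G ∈ 𝓡_ℓ such that f(n) = [x₁^n ⋯ x_ℓ^n] G for all n ∈ ℕ. -/

import Mathlib

/-- The class `𝓡_k` of ℕ-rational generating functions in `k` variables: the smallest
class of power series in `ℕ[[x₁,…,x_k]]` containing `0` and the variables, closed under
addition and multiplication, and containing `1/(1-F)` (the unique solution `G` of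
`G = 1 + F·G`) whenever it contains an `F` with zero constant term. -/
inductive NRational (k : ℕ) : MvPowerSeries (Fin k) ℕ → Prop
  | zero : NRational k 0
  | X : ∀ i : Fin k, NRational k (MvPowerSeries.X i)
  | add : ∀ {F G}, NRational k F → NRational k G → NRational k (F + G)
  | mul : ∀ {F G}, NRational k F → NRational k G → NRational k (F * G)
  | geom : ∀ {F G}, NRational k F → MvPowerSeries.constantCoeff F = 0 →
      G = 1 + F * G → NRational k G

namespace QD
open MvPowerSeries

variable {k c : ℕ}

/-! ### Total degree and the star operation -/

def deg (e : Fin k →₀ ℕ) : ℕ := ∑ i, e i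

lemma deg_add (p q : Fin k →₀ ℕ) : deg (p + q) = deg p + deg q := by
  simp [deg, Finset.sum_add_distrib]

lemma deg_pos_of_ne_zero {p : Fin k →₀ ℕ} (h : p ≠ 0) : 0 < deg p := by
  rcases Finsupp.ne_iff.mp h with ⟨i, hi⟩
  simp only [Finsupp.coe_zero, Pi.zero_apply] at hi
  exact lt_of_lt_of_le (Nat.pos_of_ne_zero hi)
    (Finset.single_le_sum (fun _ _ => Nat.zero_le _) (Finset.mem_univ i))

lemma coeff_pow_eq_zero {A : MvPowerSeries (Fin k) ℕ}
    (hA : constantCoeff A = 0) :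
    ∀ n (e : Fin k →₀ ℕ), deg e < n → coeff e (A ^ n) = 0 := by
  intro n
  induction n with
  | zero => intro e he; omega
  | succ n ih =>
      intro e he
      rw [pow_succ, mul_comm, coeff_mul]
      apply Finset.sum_eq_zero
      intro p hp
      rw [Finset.HasAntidiagonal.mem_antidiagonal] at hp
      by_cases h1 : p.1 = 0
      · rw [h1, ← coeff_zero_eq_constantCoeff] at *
        rw [hA, zero_mul]
      · have : deg p.2 < n := by
          have := deg_add p.1 p.2
          rw [hp] at this
          have := deg_pos_of_ne_zero h1
          omega
        rw [ih p.2 this, mul_zero]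

noncomputable def star (A : MvPowerSeries (Fin k) ℕ) : MvPowerSeries (Fin k) ℕ :=
  fun e => ∑ n ∈ Finset.range (deg e + 1), coeff e (A ^ n)

lemma coeff_star {A : MvPowerSeries (Fin k) ℕ}
    (hA : constantCoeff A = 0) (e : Fin k →₀ ℕ) {N : ℕ} (hN : deg e < N) :
    coeff e (star A) = ∑ n ∈ Finset.range N, coeff e (A ^ n) := by
  have : coeff e (star A) = ∑ n ∈ Finset.range (deg e + 1), coeff e (A ^ n) := rfl
  rw [this]
  apply Finset.sum_subset
  · intro x hx; simp only [Finset.mem_range] at *; omega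
  · intro x _ hx
    simp only [Finset.mem_range] at hx
    exact coeff_pow_eq_zero hA x e (by omega)

lemma star_eq {A : MvPowerSeries (Fin k) ℕ}
    (hA : constantCoeff A = 0) : star A = 1 + A * star A := by
  ext e
  classical
  set N := deg e + 1 with hNdef
  rw [coeff_star hA e (show deg e < N + 1 by omega)]
  rw [← map_sum, geom_sum_succ, add_comm, map_add, map_add]
  congr 1
  rw [coeff_mul, coeff_mul]
  apply Finset.sum_congr rfl
  intro p hp
  rw [Finset.HasAntidiagonal.mem_antidiagonal] at hp
  congr 1
  rw [coeff_star hA p.2]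
  · rw [map_sum]
  · have := deg_add p.1 p.2
    rw [hp] at this
    omega

/-- uniqueness of solutions of proper one-dimensional linear equations -/
lemma arden_unique {A B X Y : MvPowerSeries (Fin k) ℕ}
    (hA : constantCoeff A = 0)
    (hX : X = B + A * X) (hY : Y = B + A * Y) : X = Y := by
  classical
  have key : ∀ d, ∀ e : Fin k →₀ ℕ, deg e = d → coeff e X = coeff e Y := by
    intro d
    induction d using Nat.strong_induction_on with
    | _ d ih =>
      intro e hd
      conv_lhs => rw [hX]
      conv_rhs => rw [hY]
      rw [map_add, map_add, coeff_mul, coeff_mul]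
      congr 1
      apply Finset.sum_congr rfl
      intro p hp
      rw [Finset.HasAntidiagonal.mem_antidiagonal] at hp
      by_cases h1 : p.1 = 0
      · rw [h1, ← coeff_zero_eq_constantCoeff] at *
        rw [hA, zero_mul, zero_mul]
      · have hlt : deg p.2 < d := by
          have h2 := deg_add p.1 p.2
          rw [hp] at h2
          have := deg_pos_of_ne_zero h1
          omega
        rw [ih (deg p.2) hlt p.2 rfl]
  ext e
  exact key (deg e) e rfl

lemma arden {A B X : MvPowerSeries (Fin k) ℕ}
    (hA : constantCoeff A = 0) (hX : X = B + A * X) :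
    X = star A * B := by
  apply arden_unique hA hX
  conv_lhs => rw [star_eq hA]
  ring

/-! ### Basic closure properties of `NRational` -/

lemma nr_one : NRational k 1 :=
  NRational.geom NRational.zero (map_zero _) (by rw [zero_mul, add_zero])

lemma nr_star {A : MvPowerSeries (Fin k) ℕ} (hA : NRational k A)
    (h0 : constantCoeff A = 0) : NRational k (star A) :=
  NRational.geom hA h0 (star_eq h0)

lemma nr_sum {ι : Type*} (S : Finset ι) (f : ι → MvPowerSeries (Fin k) ℕ)
    (h : ∀ i ∈ S, NRational k (f i)) : NRational k (∑ i ∈ S, f i) := by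
  classical
  induction S using Finset.induction_on with
  | empty => simpa using NRational.zero
  | insert _ _ hni ih =>
      rw [Finset.sum_insert hni]
      exact NRational.add (h _ (Finset.mem_insert_self _ _))
        (ih fun i hi => h i (Finset.mem_insert_of_mem hi))

lemma nr_pow {F : MvPowerSeries (Fin k) ℕ} (h : NRational k F) (n : ℕ) :
    NRational k (F ^ n) := by
  induction n with
  | zero => simpa using nr_one
  | succ n ih => rw [pow_succ]; exact NRational.mul ih h

lemma nr_monomial (e : Fin k →₀ ℕ) :
    NRational k (MvPowerSeries.monomial e 1) := by
  induction e using Finsupp.induction with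
  | zero => simpa using nr_one
  | single_add a n f _ _ ih =>
      have : (MvPowerSeries.monomial (Finsupp.single a n + f) (1 : ℕ))
          = (MvPowerSeries.X a) ^ n * MvPowerSeries.monomial f 1 := by
        rw [MvPowerSeries.X_pow_eq, MvPowerSeries.monomial_mul_monomial, one_mul]
      rw [this]
      exact NRational.mul (nr_pow (NRational.X a) n) ih

/-! ### Elementary division arithmetic -/

lemma split {c a r s t u v : ℕ} (hc : 0 < c) (hr : r < c) (hs : s < c) (ht : t < c)
    (h : c * u + s + (c * v + t) = c * a + r) :
    t = (if r < s then c + r - s else r - s) ∧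
      u + v + (if r < s then 1 else 0) = a := by
  have h2 : c * (u + v) + (s + t) = c * a + r := by
    rw [Nat.mul_add]; linarith
  have hmod : (s + t) % c = r := by
    have e1 : (c * (u + v) + (s + t)) % c = (s + t) % c :=
      Nat.mul_add_mod _ _ _
    have e2 : (c * a + r) % c = r := by
      rw [Nat.mul_add_mod]
      exact Nat.mod_eq_of_lt hr
    rw [← e1, h2, e2]
  have hdm := Nat.div_add_mod (s + t) c
  have hq1 : (s + t) / c < 2 := by
    rw [Nat.div_lt_iff_lt_mul hc]
    omega
  obtain ⟨q, hq⟩ : ∃ q, (s + t) / c = q := ⟨_, rfl⟩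
  rw [hq] at hq1 hdm
  rw [hmod] at hdm
  have hq01 : q = 0 ∨ q = 1 := by omega
  rcases hq01 with hq' | hq' <;> subst hq'
  · have hst : s + t = r := by rw [Nat.mul_zero] at hdm; omega
    have hcc : c * (u + v) = c * a := by omega
    have huv : u + v = a := Nat.eq_of_mul_eq_mul_left hc hcc
    have hrs : ¬ r < s := by omega
    rw [if_neg hrs, if_neg hrs]
    omega
  · have hst : s + t = c + r := by rw [Nat.mul_one] at hdm; omega
    have hcc : c * (u + v + 1) = c * a := by
      rw [Nat.mul_add, Nat.mul_one]; omega
    have huv : u + v + 1 = a := Nat.eq_of_mul_eq_mul_left hc hcc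
    have hrs : r < s := by omega
    rw [if_pos hrs, if_pos hrs]
    omega

lemma split_inv {c a r s u v : ℕ} (hc : 0 < c) (hr : r < c) (hs : s < c)
    (huv : u + v + (if r < s then 1 else 0) = a) :
    c * u + s + (c * v + (if r < s then c + r - s else r - s)) = c * a + r := by
  by_cases hrs : r < s
  · rw [if_pos hrs] at *
    have ha : a = u + v + 1 := huv.symm
    subst ha
    rw [Nat.mul_add, Nat.mul_add, Nat.mul_one]
    have h1 : s ≤ c + r := by omega
    generalize c * u = A
    generalize c * v = B
    omega
  · rw [if_neg hrs] at *
    have ha : a = u + v := by omega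
    subst ha
    rw [Nat.mul_add]
    have h1 : s ≤ r := by omega
    generalize c * u = A
    generalize c * v = B
    omega

lemma mul_small {c x y v : ℕ} (hc : 2 ≤ c) (hv : v ≤ 1) (h : c * x + y = v) :
    x = 0 ∧ y = v := by
  have h1 : c * x ≤ 1 := by
    generalize c * x = A at h
    omega
  have hx : x = 0 := by
    by_contra hx
    have h2 : c ≤ c * x := Nat.le_mul_of_pos_right c (Nat.pos_of_ne_zero hx)
    generalize c * x = A at h1 h2
    omega
  subst hx
  rw [Nat.mul_zero, Nat.zero_add] at h
  exact ⟨rfl, h⟩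

/-! ### The section operator -/

noncomputable def fsup (g : Fin k → ℕ) : Fin k →₀ ℕ := Finsupp.equivFunOnFinite.symm g

@[simp] lemma fsup_apply (g : Fin k → ℕ) (i : Fin k) : fsup g i = g i := rfl

noncomputable def sec (c : ℕ) (r : Fin k → ℕ) (F : MvPowerSeries (Fin k) ℕ) :
    MvPowerSeries (Fin k) ℕ :=
  fun e => coeff (fsup fun i => c * e i + r i) F

lemma coeff_sec (r : Fin k → ℕ) (F : MvPowerSeries (Fin k) ℕ) (e : Fin k →₀ ℕ) :
    coeff e (sec c r F) = coeff (fsup fun i => c * e i + r i) F := rfl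

lemma sec_add (r : Fin k → ℕ) (F G : MvPowerSeries (Fin k) ℕ) :
    sec c r (F + G) = sec c r F + sec c r G := by
  ext e
  rw [map_add, coeff_sec, coeff_sec, coeff_sec, map_add]

lemma constantCoeff_sec (r : Fin k → ℕ) (F : MvPowerSeries (Fin k) ℕ) :
    constantCoeff (sec c r F) = coeff (fsup r) F := by
  rw [← coeff_zero_eq_constantCoeff, coeff_sec]
  congr 1
  ext i
  simp

/-- carry vector -/
noncomputable def dd (r : Fin k → ℕ) (s : Fin k → Fin c) : Fin k →₀ ℕ :=
  fsup fun i => if r i < (s i : ℕ) then 1 else 0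

/-- complementary residue -/
def tt (r : Fin k → ℕ) (s : Fin k → Fin c) : Fin k → ℕ :=
  fun i => if r i < (s i : ℕ) then c + r i - (s i : ℕ) else r i - (s i : ℕ)

lemma tt_lt (hc : 0 < c) (r : Fin k → ℕ) (hr : ∀ i, r i < c) (s : Fin k → Fin c) (i : Fin k) :
    tt r s i < c := by
  unfold tt
  have := (s i).isLt
  have := hr i
  split_ifs with h <;> omega

lemma sec_mul (hc : 0 < c) (r : Fin k → ℕ) (hr : ∀ i, r i < c)
    (F G : MvPowerSeries (Fin k) ℕ) :
    sec c r (F * G) = ∑ s : Fin k → Fin c,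
      MvPowerSeries.monomial (dd r s) 1 *
        (sec c (fun i => (s i : ℕ)) F * sec c (tt r s) G) := by
  classical
  ext a
  rw [map_sum]
  have hR : ∀ s : Fin k → Fin c,
      coeff a (MvPowerSeries.monomial (dd r s) 1 *
          (sec c (fun i => (s i : ℕ)) F * sec c (tt r s) G))
      = ∑ p ∈ (if dd r s ≤ a then Finset.HasAntidiagonal.antidiagonal (a - dd r s) else (∅ : Finset _)),
          coeff (fsup fun i => c * p.1 i + (s i : ℕ)) F *
            coeff (fsup fun i => c * p.2 i + tt r s i) G := by
    intro s
    rw [coeff_monomial_mul]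
    split_ifs with h
    · rw [one_mul, coeff_mul]
      apply Finset.sum_congr rfl
      intro p _
      rw [coeff_sec, coeff_sec]
    · simp
  simp only [hR]
  rw [Finset.sum_sigma']
  rw [coeff_sec, coeff_mul]
  -- the forward map
  refine Finset.sum_nbij'
    (fun p => ⟨fun i => (⟨p.1 i % c, Nat.mod_lt _ hc⟩ : Fin c),
      (fsup fun i => p.1 i / c, fsup fun i => p.2 i / c)⟩)
    (fun x => (fsup fun i => c * x.2.1 i + (x.1 i : ℕ),
      fsup fun i => c * x.2.2 i + tt r x.1 i)) ?_ ?_ ?_ ?_ ?_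
  · -- maps into the sigma set
    intro p hp
    rw [Finset.HasAntidiagonal.mem_antidiagonal] at hp
    have hcomp : ∀ i : Fin k, p.1 i + p.2 i = c * a i + r i := by
      intro i
      have h0 := DFunLike.congr_fun hp i
      simpa using h0
    set s : Fin k → Fin c := fun i => (⟨p.1 i % c, Nat.mod_lt _ hc⟩ : Fin c) with hs
    have key : ∀ i : Fin k, p.1 i / c + p.2 i / c + dd r s i = a i := by
      intro i
      exact (split (a := a i) (r := r i) (s := p.1 i % c) (t := p.2 i % c)
        (u := p.1 i / c) (v := p.2 i / c) hc (hr i) (Nat.mod_lt _ hc) (Nat.mod_lt _ hc)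
        (by rw [Nat.div_add_mod, Nat.div_add_mod]; exact hcomp i)).2
    have hdd : dd r s ≤ a := by
      rw [Finsupp.le_def]
      intro i
      obtain ⟨U, V, hUV⟩ : ∃ U V, U + V + dd r s i = a i := ⟨_, _, key i⟩
      omega
    rw [Finset.mem_sigma]
    refine ⟨Finset.mem_univ _, ?_⟩
    rw [if_pos hdd, Finset.HasAntidiagonal.mem_antidiagonal]
    ext i
    simp only [Finsupp.add_apply, Finsupp.tsub_apply, fsup_apply]
    have h := key i
    revert h
    generalize p.1 i / c = U
    generalize p.2 i / c = V
    intro h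
    omega
  · -- maps back into the antidiagonal
    intro x hx
    rw [Finset.mem_sigma] at hx
    obtain ⟨-, hx2⟩ := hx
    by_cases hdd : dd r x.1 ≤ a
    swap
    · rw [if_neg hdd] at hx2; exact absurd hx2 (Finset.notMem_empty _)
    rw [if_pos hdd, Finset.HasAntidiagonal.mem_antidiagonal] at hx2
    rw [Finset.HasAntidiagonal.mem_antidiagonal]
    ext i
    have h1 : x.2.1 i + x.2.2 i = a i - dd r x.1 i := by
      have h0 := DFunLike.congr_fun hx2 i
      simpa [Finsupp.tsub_apply] using h0
    have h2 : dd r x.1 i ≤ a i := Finsupp.le_def.mp hdd i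
    have huv : x.2.1 i + x.2.2 i + (if r i < (x.1 i : ℕ) then 1 else 0) = a i := by
      have e : (if r i < (x.1 i : ℕ) then 1 else 0) = dd r x.1 i := rfl
      rw [e]
      omega
    have hsi := split_inv (a := a i) (u := x.2.1 i) (v := x.2.2 i) hc (hr i) (x.1 i).isLt huv
    simp only [Finsupp.add_apply, fsup_apply]
    exact hsi
  · -- left inverse
    intro p hp
    rw [Finset.HasAntidiagonal.mem_antidiagonal] at hp
    have hcomp : ∀ i : Fin k, p.1 i + p.2 i = c * a i + r i := by
      intro i
      have h0 := DFunLike.congr_fun hp i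
      simpa using h0
    have hmod : ∀ i : Fin k, p.2 i % c
        = tt r (fun j => (⟨p.1 j % c, Nat.mod_lt _ hc⟩ : Fin c)) i := by
      intro i
      exact (split (a := a i) (r := r i) (s := p.1 i % c) (t := p.2 i % c)
        (u := p.1 i / c) (v := p.2 i / c) hc (hr i) (Nat.mod_lt _ hc) (Nat.mod_lt _ hc)
        (by rw [Nat.div_add_mod, Nat.div_add_mod]; exact hcomp i)).1
    refine Prod.ext ?_ ?_ <;> ext i <;> simp only [fsup_apply, Fin.val_mk]
    · exact Nat.div_add_mod _ _
    · rw [← hmod i]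
      exact Nat.div_add_mod _ _
  · -- right inverse
    intro x hx
    obtain ⟨s, u, v⟩ := x
    refine Sigma.ext ?_ (heq_of_eq ?_)
    · funext i
      apply Fin.ext
      simp only [fsup_apply, Fin.val_mk]
      rw [Nat.mul_add_mod]
      exact Nat.mod_eq_of_lt (s i).isLt
    · refine Prod.ext ?_ ?_ <;> ext i <;> simp only [fsup_apply]
      · rw [Nat.mul_add_div hc, Nat.div_eq_of_lt (s i).isLt, Nat.add_zero]
      · rw [Nat.mul_add_div hc, Nat.div_eq_of_lt (tt_lt hc r hr s i), Nat.add_zero]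
  · -- values agree
    intro p hp
    rw [Finset.HasAntidiagonal.mem_antidiagonal] at hp
    have hcomp : ∀ i : Fin k, p.1 i + p.2 i = c * a i + r i := by
      intro i
      have h0 := DFunLike.congr_fun hp i
      simpa using h0
    have hmod : ∀ i : Fin k, p.2 i % c
        = tt r (fun j => (⟨p.1 j % c, Nat.mod_lt _ hc⟩ : Fin c)) i := by
      intro i
      exact (split (a := a i) (r := r i) (s := p.1 i % c) (t := p.2 i % c)
        (u := p.1 i / c) (v := p.2 i / c) hc (hr i) (Nat.mod_lt _ hc) (Nat.mod_lt _ hc)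
        (by rw [Nat.div_add_mod, Nat.div_add_mod]; exact hcomp i)).1
    have e1 : p.1 = fsup fun i => c * (p.1 i / c) + p.1 i % c := by
      ext i
      simp only [fsup_apply]
      exact (Nat.div_add_mod _ _).symm
    have e2 : p.2 = fsup fun i => c * (p.2 i / c)
        + tt r (fun j => (⟨p.1 j % c, Nat.mod_lt _ hc⟩ : Fin c)) i := by
      ext i
      simp only [fsup_apply]
      rw [← hmod i]
      exact (Nat.div_add_mod _ _).symm
    conv_lhs => rw [e1, e2]
    simp only [fsup_apply, Fin.val_mk]



/-! ### Solving proper linear systems -/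

lemma system {ι : Type} [DecidableEq ι] (V : ι → MvPowerSeries (Fin k) ℕ) :
    ∀ (n : ℕ) (S : Finset ι), S.card = n →
    ∀ (m : ι → ℕ) (A : ι → ι → MvPowerSeries (Fin k) ℕ)
      (P : ι → MvPowerSeries (Fin k) ℕ),
      (∀ r ∈ S, ∀ s ∈ S, NRational k (A r s)) →
      (∀ r ∈ S, NRational k (P r)) →
      (∀ r ∈ S, ∀ s ∈ S, constantCoeff (A r s) ≠ 0 → m s < m r) →
      (∀ r ∈ S, V r = P r + ∑ s ∈ S, A r s * V s) →
      ∀ r ∈ S, NRational k (V r) := by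
  intro n
  induction n using Nat.strong_induction_on with
  | _ n ih =>
    intro S hcard m A P hA hP hnil heq r0 hr0
    have hSne : S.Nonempty := ⟨r0, hr0⟩
    -- we eliminate r0 itself
    have hsub : ∀ u ∈ (S.erase r0), u ∈ S := fun u hu => Finset.mem_of_mem_erase hu
    have hA00 : constantCoeff (A r0 r0) = 0 := by
      by_contra h
      exact absurd (hnil r0 hr0 r0 hr0 h) (lt_irrefl _)
    set Q := star (A r0 r0) with hQdef
    have hQ : NRational k Q := nr_star (hA r0 hr0 r0 hr0) hA00
    have heq0 : V r0 = (P r0 + ∑ s ∈ (S.erase r0), A r0 s * V s) + A r0 r0 * V r0 := by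
      conv_lhs => rw [heq r0 hr0, ← Finset.add_sum_erase _ _ hr0]
      ring
    have hV0 : V r0 = Q * (P r0 + ∑ s ∈ (S.erase r0), A r0 s * V s) :=
      arden hA00 heq0
    -- the reduced system on S'
    have heq' : ∀ u ∈ (S.erase r0), V u = (P u + A u r0 * Q * P r0)
        + ∑ s ∈ (S.erase r0), (A u s + A u r0 * Q * A r0 s) * V s := by
      intro u hu
      have expand : A u r0 * V r0
          = A u r0 * Q * P r0 + ∑ s ∈ (S.erase r0), A u r0 * Q * (A r0 s * V s) := by
        rw [hV0, ← mul_assoc, mul_add, Finset.mul_sum]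
      have step1 : V u = P u + (A u r0 * V r0 + ∑ s ∈ (S.erase r0), A u s * V s) := by
        rw [heq u (hsub u hu)]
        congr 1
        exact (Finset.add_sum_erase _ _ hr0).symm
      have step2 : ∑ s ∈ (S.erase r0), (A u s + A u r0 * Q * A r0 s) * V s
          = (∑ s ∈ (S.erase r0), A u s * V s) + ∑ s ∈ (S.erase r0), A u r0 * Q * (A r0 s * V s) := by
        rw [← Finset.sum_add_distrib]
        apply Finset.sum_congr rfl
        intro s _
        ring
      rw [step1, expand, step2]
      ring
    have hlt : (S.erase r0).card < n := by
      rw [← hcard]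
      exact Finset.card_erase_lt_of_mem hr0
    have hrec := ih (S.erase r0).card hlt (S.erase r0) rfl m
      (fun u s => A u s + A u r0 * Q * A r0 s)
      (fun u => P u + A u r0 * Q * P r0)
      (fun u hu s hs => NRational.add (hA u (hsub u hu) s (hsub s hs))
        (NRational.mul (NRational.mul (hA u (hsub u hu) r0 hr0) hQ) (hA r0 hr0 s (hsub s hs))))
      (fun u hu => NRational.add (hP u (hsub u hu))
        (NRational.mul (NRational.mul (hA u (hsub u hu) r0 hr0) hQ) (hP r0 hr0)))
      (by
        intro u hu s hs hne
        rw [map_add, map_mul, map_mul] at hne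
        by_cases h1 : constantCoeff (A u s) = 0
        · rw [h1, zero_add] at hne
          have f12 := Nat.mul_ne_zero_iff.mp hne
          have f1 := (Nat.mul_ne_zero_iff.mp f12.1).1
          exact lt_trans (hnil r0 hr0 s (hsub s hs) f12.2) (hnil u (hsub u hu) r0 hr0 f1)
        · exact hnil u (hsub u hu) s (hsub s hs) h1)
      heq'
    rw [hV0]
    exact NRational.mul hQ (NRational.add (hP r0 hr0)
      (nr_sum _ _ fun s hs => NRational.mul (hA r0 hr0 s (hsub s hs)) (hrec s hs)))

/-! ### Sections of the basic series -/

lemma sec_zero (r : Fin k → ℕ) : sec c r (0 : MvPowerSeries (Fin k) ℕ) = 0 := by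
  ext e
  rw [coeff_sec, map_zero, map_zero]

lemma nr_sec_one (hc : 0 < c) (r : Fin k → ℕ) : NRational k (sec c r 1) := by
  classical
  by_cases h : ∀ i, r i = 0
  · have h1 : sec c r (1 : MvPowerSeries (Fin k) ℕ) = 1 := by
      ext e
      rw [coeff_sec, coeff_one, coeff_one]
      have hiff : (fsup fun i => c * e i + r i) = 0 ↔ e = 0 := by
        constructor
        · intro h0
          ext i
          have hi := DFunLike.congr_fun h0 i
          simp only [fsup_apply, Finsupp.coe_zero, Pi.zero_apply] at hi ⊢
          have h2 : c * e i = 0 := by generalize c * e i = A at hi ⊢; omega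
          rcases Nat.mul_eq_zero.mp h2 with h3 | h3
          · omega
          · exact h3
        · intro h0
          subst h0
          ext i
          simp [h i]
      rw [if_congr hiff rfl rfl]
    rw [h1]; exact nr_one
  · have h1 : sec c r (1 : MvPowerSeries (Fin k) ℕ) = 0 := by
      ext e
      rw [coeff_sec, coeff_one, map_zero]
      split_ifs with h0
      · exfalso
        push_neg at h
        obtain ⟨j, hj⟩ := h
        have hji := DFunLike.congr_fun h0 j
        simp only [fsup_apply, Finsupp.coe_zero, Pi.zero_apply] at hji
        generalize c * e j = A at hji
        omega
      · rfl
    rw [h1]; exact NRational.zero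

lemma nr_sec_X (hc : 0 < c) (r : Fin k → ℕ) (hr : ∀ i, r i < c) (i0 : Fin k) :
    NRational k (sec c r (MvPowerSeries.X i0)) := by
  classical
  rcases Nat.lt_or_ge c 2 with hc2 | hc2
  · -- c = 1
    have hc1 : c = 1 := by omega
    subst hc1
    have h1 : sec 1 r (MvPowerSeries.X i0) = MvPowerSeries.X (σ := Fin k) (R := ℕ) i0 := by
      ext e
      rw [coeff_sec]
      have he : (fsup fun i => 1 * e i + r i) = e := by
        ext i
        have := hr i
        simp only [fsup_apply]
        omega
      rw [he]
    rw [h1]; exact NRational.X i0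
  · by_cases hcond : ∀ j, r j = (Finsupp.single i0 1 : Fin k →₀ ℕ) j
    · have h1 : sec c r (MvPowerSeries.X i0) = 1 := by
        ext e
        rw [coeff_sec, coeff_X, coeff_one]
        have hiff : (fsup fun i => c * e i + r i) = Finsupp.single i0 1 ↔ e = 0 := by
          constructor
          · intro h0
            ext i
            have hi := DFunLike.congr_fun h0 i
            simp only [fsup_apply] at hi
            have hle : (Finsupp.single i0 1 : Fin k →₀ ℕ) i ≤ 1 := by
              rw [Finsupp.single_apply]
              split <;> omega
            have := (mul_small hc2 hle hi).1
            simpa using this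
          · intro h0
            subst h0
            ext j
            have hj := hcond j
            simp only [fsup_apply, Finsupp.coe_zero, Pi.zero_apply, Nat.mul_zero,
              Nat.zero_add]
            exact hj
        rw [if_congr hiff rfl rfl]
      rw [h1]; exact nr_one
    · have h1 : sec c r (MvPowerSeries.X i0) = 0 := by
        ext e
        rw [coeff_sec, coeff_X, map_zero]
        split_ifs with h0
        · exfalso
          push_neg at hcond
          obtain ⟨j, hj⟩ := hcond
          have hji := DFunLike.congr_fun h0 j
          simp only [fsup_apply] at hji
          have hle : (Finsupp.single i0 1 : Fin k →₀ ℕ) j ≤ 1 := by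
            rw [Finsupp.single_apply]
            split <;> omega
          exact hj (mul_small hc2 hle hji).2
        · rfl
      rw [h1]; exact NRational.zero

/-! ### Main closure theorem for sections -/

def ttF (hc : 0 < c) (ρ s : Fin k → Fin c) : Fin k → Fin c :=
  fun i => ⟨tt (fun j => (ρ j : ℕ)) s i,
    tt_lt hc _ (fun j => (ρ j).isLt) s i⟩

lemma sec_nrational (hc : 0 < c) {F : MvPowerSeries (Fin k) ℕ} (hF : NRational k F) :
    ∀ r : Fin k → ℕ, (∀ i, r i < c) → NRational k (sec c r F) := by
  classical
  induction hF with
  | zero =>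
      intro r _
      rw [sec_zero]
      exact NRational.zero
  | X i0 =>
      intro r hr
      exact nr_sec_X hc r hr i0
  | add hFa hGa ihF ihG =>
      intro r hr
      rw [sec_add]
      exact NRational.add (ihF r hr) (ihG r hr)
  | mul hFa hGa ihF ihG =>
      intro r hr
      rw [sec_mul hc r hr]
      apply nr_sum
      intro s _
      exact NRational.mul (nr_monomial _)
        (NRational.mul (ihF _ (fun i => (s i).isLt)) (ihG _ (tt_lt hc r hr s)))
  | @geom Fa G hFa h0 hGeq ih =>
      intro r hr
      have key : ∀ ρ : Fin k → Fin c, NRational k (sec c (fun i => (ρ i : ℕ)) G) := by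
        intro ρ
        refine system (fun ρ : Fin k → Fin c => sec c (fun i => (ρ i : ℕ)) G)
          Finset.univ.card Finset.univ rfl
          (fun ρ => ∑ i, (ρ i : ℕ))
          (fun ρ σ' => ∑ s ∈ Finset.univ.filter (fun s => ttF hc ρ s = σ'),
            MvPowerSeries.monomial (dd (fun j => (ρ j : ℕ)) s) 1 *
              sec c (fun i => (s i : ℕ)) Fa)
          (fun ρ => sec c (fun i => (ρ i : ℕ)) 1)
          ?_ ?_ ?_ ?_ ρ (Finset.mem_univ _)
        · -- rationality of coefficients
          intro u _ s' _
          apply nr_sum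
          intro s _
          exact NRational.mul (nr_monomial _) (ih _ (fun i => (s i).isLt))
        · -- rationality of constants
          intro u _
          exact nr_sec_one hc _
        · -- nilpotency
          intro u _ s' _ hne
          rw [map_sum] at hne
          obtain ⟨s, hsmem, hs⟩ := Finset.exists_ne_zero_of_sum_ne_zero hne
          rw [map_mul] at hs
          obtain ⟨h1, h2⟩ := Nat.mul_ne_zero_iff.mp hs
          have hdd0 : dd (fun j => (u j : ℕ)) s = 0 := by
            by_contra hdd
            apply h1
            rw [← coeff_zero_eq_constantCoeff, coeff_monomial,
              if_neg (fun hh => hdd hh.symm)]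
          have hsle : ∀ i, (s i : ℕ) ≤ (u i : ℕ) := by
            intro i
            have hdi := DFunLike.congr_fun hdd0 i
            simp only [dd, fsup_apply, Finsupp.coe_zero, Pi.zero_apply] at hdi
            by_contra hlt
            rw [if_pos (by omega)] at hdi
            omega
          have hsnz : ∃ i, (s i : ℕ) ≠ 0 := by
            by_contra hall
            push_neg at hall
            apply h2
            rw [constantCoeff_sec]
            have hz : (fsup fun i => ((s i : ℕ))) = 0 := by
              ext i
              simp [hall i]
            rw [hz, coeff_zero_eq_constantCoeff]
            exact h0
          have hσ : ∀ i, (s' i : ℕ) = tt (fun j => (u j : ℕ)) s i := by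
            have hfil := (Finset.mem_filter.mp hsmem).2
            intro i
            rw [← hfil]
            rfl
          obtain ⟨i0, hi0⟩ := hsnz
          apply Finset.sum_lt_sum
          · intro i _
            rw [hσ i]
            simp only [tt]
            rw [if_neg (not_lt.mpr (hsle i))]
            omega
          · refine ⟨i0, Finset.mem_univ i0, ?_⟩
            rw [hσ i0]
            simp only [tt]
            rw [if_neg (not_lt.mpr (hsle i0))]
            have := hsle i0
            omega
        · -- the linear system itself
          intro u _
          beta_reduce
          conv_lhs => rw [hGeq]
          rw [sec_add, sec_mul hc _ (fun i => (u i).isLt)]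
          congr 1
          symm
          calc ∑ σ' : Fin k → Fin c,
                (∑ s ∈ Finset.univ.filter (fun s => ttF hc u s = σ'),
                  MvPowerSeries.monomial (dd (fun j => (u j : ℕ)) s) 1 *
                    sec c (fun i => (s i : ℕ)) Fa) * sec c (fun i => (σ' i : ℕ)) G
              = ∑ σ' : Fin k → Fin c,
                ∑ s ∈ Finset.univ.filter (fun s => ttF hc u s = σ'),
                  (MvPowerSeries.monomial (dd (fun j => (u j : ℕ)) s) 1 *
                    sec c (fun i => (s i : ℕ)) Fa) * sec c (fun i => (σ' i : ℕ)) G := by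
                refine Finset.sum_congr rfl fun σ' _ => ?_
                rw [Finset.sum_mul]
            _ = ∑ σ' : Fin k → Fin c,
                ∑ s ∈ Finset.univ.filter (fun s => ttF hc u s = σ'),
                  (MvPowerSeries.monomial (dd (fun j => (u j : ℕ)) s) 1 *
                    sec c (fun i => (s i : ℕ)) Fa) *
                      sec c (fun i => ((ttF hc u s) i : ℕ)) G := by
                refine Finset.sum_congr rfl fun σ' _ => ?_
                refine Finset.sum_congr rfl fun s hs => ?_
                rw [(Finset.mem_filter.mp hs).2]
            _ = ∑ s : Fin k → Fin c,
                  (MvPowerSeries.monomial (dd (fun j => (u j : ℕ)) s) 1 *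
                    sec c (fun i => (s i : ℕ)) Fa) *
                      sec c (fun i => ((ttF hc u s) i : ℕ)) G :=
                Finset.sum_fiberwise_of_maps_to (fun s _ => Finset.mem_univ _) _
            _ = ∑ s : Fin k → Fin c,
                  MvPowerSeries.monomial (dd (fun j => (u j : ℕ)) s) 1 *
                    (sec c (fun i => (s i : ℕ)) Fa *
                      sec c (tt (fun j => (u j : ℕ)) s) G) := by
                refine Finset.sum_congr rfl fun s _ => ?_
                rw [mul_assoc]
                rfl
      exact key (fun i => ⟨r i, hr i⟩)

end QD

/-- Every quasi-diagonal `n ↦ [x₁^{cn} ⋯ x_k^{cn}] F` of an ℕ-rational generating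
function is a diagonal of an ℕ-rational generating function. -/
theorem quasiDiagonal_isDiagonal (c k : ℕ) (hc : 1 ≤ c) (hk : 1 ≤ k)
    (F : MvPowerSeries (Fin k) ℕ) (hF : NRational k F) (f : ℕ → ℕ)
    (hf : ∀ n : ℕ,
      f n = MvPowerSeries.coeff (Finsupp.equivFunOnFinite.symm fun _ => c * n) F) :
    ∃ (l : ℕ) (G : MvPowerSeries (Fin l) ℕ), 1 ≤ l ∧ NRational l G ∧
      ∀ n : ℕ,
        f n = MvPowerSeries.coeff (Finsupp.equivFunOnFinite.symm fun _ => n) G := by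
  refine ⟨k, QD.sec c (fun _ => 0) F, hk, ?_, ?_⟩
  · exact QD.sec_nrational hc hF (fun _ => 0) (fun _ => hc)
  · intro n
    rw [hf n, QD.coeff_sec]
    congr 1
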